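/- Define κ : ℝ² → ℝ² by κ(w) := (2·arctan(‖w‖² − 1) + π/2 + 2) · w, where ‖·‖ denotes the Euclidean norm on ℝ². Then κ is strongly monotone and globally Lipschitz continuous: there exist constants m > 0 and L > 0 such that ⟨κ(v) − κ(w), v − w⟩ ≥ m‖v − w‖² and ‖κ(v) − κ(w)‖ ≤ L‖v − w‖ for all v, w ∈ ℝ². -/

import Mathlib

/-- The nonlinear material law `κ(w) = (2 arctan(‖w‖² - 1) + π/2 + 2) w` on `ℝ²`. -/
noncomputable def kappa (w : EuclideanSpace ℝ (Fin 2)) : EuclideanSpace ℝ (Fin 2) :=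
  (2 * Real.arctan (‖w‖ ^ 2 - 1) + Real.pi / 2 + 2) • w



/-- MVT bound: for `0 ≤ r ≤ R`, `r * (arctan (R²-1) - arctan (r²-1)) ≤ 3 (R - r)`. -/
lemma arctan_slope {r R : ℝ} (hr : 0 ≤ r) (hrR : r ≤ R) :
    r * (Real.arctan (R ^ 2 - 1) - Real.arctan (r ^ 2 - 1)) ≤ 3 * (R - r) := by
  rcases eq_or_lt_of_le hrR with h | h
  · subst h; simp
  · set f : ℝ → ℝ := fun t => Real.arctan (t ^ 2 - 1) with hf
    have hderiv : ∀ t : ℝ, HasDerivAt f (1 / (1 + (t ^ 2 - 1) ^ 2) * (2 * t)) t := by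
      intro t
      have h1 : HasDerivAt (fun t : ℝ => t ^ 2 - 1) (2 * t) t := by
        simpa using (hasDerivAt_pow 2 t).sub_const 1
      have := (Real.hasDerivAt_arctan (t ^ 2 - 1)).comp t h1
      simpa [hf, Function.comp_def] using this
    obtain ⟨c, hc, hceq⟩ := exists_hasDerivAt_eq_slope f
      (fun t => 1 / (1 + (t ^ 2 - 1) ^ 2) * (2 * t)) h
      (fun t _ => (hderiv t).continuousAt.continuousWithinAt)
      (fun t _ => hderiv t)
    have hcr : r < c := hc.1
    have hcR : c < R := hc.2
    have hden : 0 < 1 + (c ^ 2 - 1) ^ 2 := by positivity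
    have hval : f R - f r = 1 / (1 + (c ^ 2 - 1) ^ 2) * (2 * c) * (R - r) := by
      rw [hceq, div_mul_cancel₀ _ (by linarith : R - r ≠ 0)]
    have hc0 : 0 < c := lt_of_le_of_lt hr hcr
    have key : c * (1 / (1 + (c ^ 2 - 1) ^ 2) * (2 * c)) ≤ 3 := by
      rw [div_mul_eq_mul_div, one_mul, ← mul_div_assoc, div_le_iff₀ hden]
      nlinarith [sq_nonneg (c ^ 2 - 4 / 3)]
    have hfpos : 0 ≤ 1 / (1 + (c ^ 2 - 1) ^ 2) * (2 * c) := by positivity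
    calc r * (Real.arctan (R ^ 2 - 1) - Real.arctan (r ^ 2 - 1))
        = r * (1 / (1 + (c ^ 2 - 1) ^ 2) * (2 * c) * (R - r)) := by rw [← hval]
      _ ≤ c * (1 / (1 + (c ^ 2 - 1) ^ 2) * (2 * c)) * (R - r) := by
          have h1 : r * (1 / (1 + (c ^ 2 - 1) ^ 2) * (2 * c)) ≤
              c * (1 / (1 + (c ^ 2 - 1) ^ 2) * (2 * c)) :=
            mul_le_mul_of_nonneg_right hcr.le hfpos
          nlinarith [sub_pos.mpr h]
      _ ≤ 3 * (R - r) := mul_le_mul_of_nonneg_right key (by linarith)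

lemma coeff_lb (x : ℝ) : 2 - Real.pi / 2 ≤ 2 * Real.arctan x + Real.pi / 2 + 2 := by
  have := Real.neg_pi_div_two_lt_arctan x
  linarith

lemma coeff_ub (x : ℝ) : 2 * Real.arctan x + Real.pi / 2 + 2 ≤ 2 + 3 * Real.pi / 2 := by
  have := Real.arctan_lt_pi_div_two x
  linarith

/-- One-sided Lipschitz bound assuming `‖w‖ ≤ ‖v‖`. -/
lemma lip_half (v w : EuclideanSpace ℝ (Fin 2)) (h : ‖w‖ ≤ ‖v‖) :
    ‖kappa v - kappa w‖ ≤ 14 * ‖v - w‖ := by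
  set av := 2 * Real.arctan (‖v‖ ^ 2 - 1) + Real.pi / 2 + 2 with hav
  set aw := 2 * Real.arctan (‖w‖ ^ 2 - 1) + Real.pi / 2 + 2 with haw
  have hsplit : kappa v - kappa w = av • (v - w) + (av - aw) • w := by
    simp [kappa, ← hav, ← haw, smul_sub, sub_smul]
  have hπ : Real.pi ≤ 4 := by linarith [Real.pi_le_four]
  have hav0 : 0 ≤ av := by
    rw [hav]; have := coeff_lb (‖v‖ ^ 2 - 1); have := Real.pi_pos; linarith
  have havub : av ≤ 8 := by have := coeff_ub (‖v‖ ^ 2 - 1); rw [hav]; linarith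
  have hmono : aw ≤ av := by
    have : Real.arctan (‖w‖ ^ 2 - 1) ≤ Real.arctan (‖v‖ ^ 2 - 1) := by
      apply Real.arctan_strictMono.monotone
      nlinarith [norm_nonneg w]
    rw [hav, haw]; linarith
  have hslope : (av - aw) * ‖w‖ ≤ 6 * ‖v - w‖ := by
    have h1 : ‖w‖ * (Real.arctan (‖v‖ ^ 2 - 1) - Real.arctan (‖w‖ ^ 2 - 1))
        ≤ 3 * (‖v‖ - ‖w‖) := arctan_slope (norm_nonneg w) h
    have h2 : ‖v‖ - ‖w‖ ≤ ‖v - w‖ := by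
      simpa using norm_sub_norm_le v w
    rw [hav, haw]
    nlinarith
  calc ‖kappa v - kappa w‖ ≤ ‖av • (v - w)‖ + ‖(av - aw) • w‖ := by
        rw [hsplit]; exact norm_add_le _ _
    _ = |av| * ‖v - w‖ + |av - aw| * ‖w‖ := by rw [norm_smul, norm_smul]; simp [Real.norm_eq_abs]
    _ = av * ‖v - w‖ + (av - aw) * ‖w‖ := by
        rw [abs_of_nonneg hav0, abs_of_nonneg (by linarith : (0:ℝ) ≤ av - aw)]
    _ ≤ 8 * ‖v - w‖ + 6 * ‖v - w‖ := by
        have := norm_nonneg (v - w)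
        have h8 : av * ‖v - w‖ ≤ 8 * ‖v - w‖ := mul_le_mul_of_nonneg_right havub this
        linarith
    _ ≤ 14 * ‖v - w‖ := by
        have := norm_nonneg (v - w); linarith

/-- `κ` is strongly monotone and globally Lipschitz continuous: there are
constants `m > 0` and `L > 0` with `⟪κ(v) - κ(w), v - w⟫ ≥ m ‖v - w‖²` and
`‖κ(v) - κ(w)‖ ≤ L ‖v - w‖` for all `v, w ∈ ℝ²`. -/
theorem statement10 :
    ∃ m L : ℝ, 0 < m ∧ 0 < L ∧
      ∀ v w : EuclideanSpace ℝ (Fin 2),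
        m * ‖v - w‖ ^ 2 ≤ (inner ℝ (kappa v - kappa w) (v - w) : ℝ) ∧
        ‖kappa v - kappa w‖ ≤ L * ‖v - w‖ := by
  refine ⟨2 - Real.pi / 2, 14, by linarith [Real.pi_lt_d2], by norm_num, fun v w => ?_⟩
  constructor
  · -- strong monotonicity
    set av := 2 * Real.arctan (‖v‖ ^ 2 - 1) + Real.pi / 2 + 2 with hav
    set aw := 2 * Real.arctan (‖w‖ ^ 2 - 1) + Real.pi / 2 + 2 with haw
    have hid : (inner ℝ (kappa v - kappa w) (v - w) : ℝ)
        = (av + aw) / 2 * ‖v - w‖ ^ 2 + (av - aw) / 2 * (‖v‖ ^ 2 - ‖w‖ ^ 2) := by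
      have e1 : ‖v - w‖ ^ 2 = ‖v‖ ^ 2 - 2 * inner ℝ v w + ‖w‖ ^ 2 := norm_sub_sq_real v w
      simp only [kappa, ← hav, ← haw, inner_sub_left, inner_sub_right,
        real_inner_smul_left, real_inner_self_eq_norm_sq, real_inner_comm w v, e1]
      ring
    have hterm2 : 0 ≤ (av - aw) / 2 * (‖v‖ ^ 2 - ‖w‖ ^ 2) := by
      rcases le_total (‖w‖ ^ 2) (‖v‖ ^ 2) with hle | hle
      · have : Real.arctan (‖w‖ ^ 2 - 1) ≤ Real.arctan (‖v‖ ^ 2 - 1) :=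
          Real.arctan_strictMono.monotone (by linarith)
        have : 0 ≤ av - aw := by rw [hav, haw]; linarith
        nlinarith
      · have : Real.arctan (‖v‖ ^ 2 - 1) ≤ Real.arctan (‖w‖ ^ 2 - 1) :=
          Real.arctan_strictMono.monotone (by linarith)
        have : av - aw ≤ 0 := by rw [hav, haw]; linarith
        nlinarith
    have hcoef : 2 - Real.pi / 2 ≤ (av + aw) / 2 := by
      have h1 := coeff_lb (‖v‖ ^ 2 - 1)
      have h2 := coeff_lb (‖w‖ ^ 2 - 1)
      rw [hav, haw]; linarith
    have hsq : (0:ℝ) ≤ ‖v - w‖ ^ 2 := sq_nonneg _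
    rw [hid]
    nlinarith
  · -- Lipschitz
    rcases le_total (‖w‖) (‖v‖) with hle | hle
    · exact lip_half v w hle
    · have := lip_half w v hle
      rw [← norm_neg (kappa w - kappa v), ← norm_neg (w - v)] at this
      simpa [neg_sub] using this
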